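/- Let |g_B⟩ = C(n,n/2)^{−1/2} Σ_{|x|=n/2} |x⟩ be the n-qubit Dicke state with n even. Then for any two distinct qubit indices i ≠ j, the correlation ⟨g_B| σ_x^{(i)} σ_x^{(j)} |g_B⟩ = n/(2(n−1)). In particular it is at least 1/2 for all n ≥ 2. -/

import Mathlib

open Matrix

noncomputable def pauliX : Matrix (Fin 2) (Fin 2) ℂ := !![0, 1; 1, 0]

/-- A single-qubit operator `m` acting on qubit `i` of an `n`-qubit register. -/
noncomputable def liftOp (n : ℕ) (i : Fin n) (m : Matrix (Fin 2) (Fin 2) ℂ) :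
    Matrix (Fin n → Fin 2) (Fin n → Fin 2) ℂ :=
  Matrix.of fun x y => if ∀ j, j ≠ i → x j = y j then m (x i) (y i) else 0

/-- The normalized Dicke state of Hamming weight `n/2` on `n` qubits. -/
noncomputable def dickeState (n : ℕ) : EuclideanSpace ℂ (Fin n → Fin 2) :=
  ((Real.sqrt (Nat.choose n (n / 2)) : ℂ))⁻¹ •
    ∑ x ∈ Finset.univ.filter
        (fun x : Fin n → Fin 2 => (Finset.univ.filter fun i => x i = 1).card = n / 2),
      EuclideanSpace.single x (1 : ℂ)

/- ## Auxiliary machinery -/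

def sw : Fin 2 → Fin 2 := fun a => if a = 0 then 1 else 0

lemma eq_or_eq_sw (a b : Fin 2) : b = a ∨ b = sw a := by revert a b; decide

lemma pauliX_sw (a : Fin 2) : pauliX a (sw a) = 1 := by
  fin_cases a <;> simp [pauliX, sw]

lemma pauliX_self (a : Fin 2) : pauliX a a = 0 := by
  fin_cases a <;> simp [pauliX, sw]

lemma liftOp_X (n : ℕ) (i : Fin n) (x z : Fin n → Fin 2) :
    liftOp n i pauliX x z = if z = Function.update x i (sw (x i)) then 1 else 0 := by
  rcases eq_or_ne z (Function.update x i (sw (x i))) with h | h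
  · subst h
    rw [if_pos rfl]
    have hc : ∀ k, k ≠ i → x k = Function.update x i (sw (x i)) k := by
      intro k hk; rw [Function.update_of_ne hk]
    simp only [liftOp, Matrix.of_apply, if_pos hc, Function.update_self, pauliX_sw]
  · rw [if_neg h]
    by_cases hc : ∀ k, k ≠ i → x k = z k
    · simp only [liftOp, Matrix.of_apply, if_pos hc]
      rcases eq_or_eq_sw (x i) (z i) with h2 | h2
      · rw [h2, pauliX_self]
      · exfalso; apply h; funext k
        by_cases hk : k = i
        · subst hk; rw [Function.update_self, h2]
        · rw [Function.update_of_ne hk, hc k hk]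
    · simp only [liftOp, Matrix.of_apply, if_neg hc]

def flip2 {n : ℕ} (i j : Fin n) (x : Fin n → Fin 2) : Fin n → Fin 2 :=
  Function.update (Function.update x i (sw (x i))) j (sw (x j))

lemma mulXX_apply {n : ℕ} (i j : Fin n) (hij : i ≠ j) (x y : Fin n → Fin 2) :
    (liftOp n i pauliX * liftOp n j pauliX) x y = if y = flip2 i j x then 1 else 0 := by
  rw [Matrix.mul_apply]
  rw [Finset.sum_eq_single (Function.update x i (sw (x i)))]
  · rw [liftOp_X, if_pos rfl, one_mul, liftOp_X]
    have : Function.update x i (sw (x i)) j = x j := Function.update_of_ne (Ne.symm hij) _ _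
    rw [this]
    rfl
  · intro z _ hz
    rw [liftOp_X, if_neg hz, zero_mul]
  · intro h; exact absurd (Finset.mem_univ _) h

lemma inner_eval (n : ℕ) (M : Matrix (Fin n → Fin 2) (Fin n → Fin 2) ℂ)
    (S : Finset (Fin n → Fin 2)) (c : ℝ) :
    (inner ℂ (((c:ℂ))⁻¹ • ∑ x ∈ S, EuclideanSpace.single x (1:ℂ))
      ((Matrix.toEuclideanCLM (𝕜 := ℂ) M)
        (((c:ℂ))⁻¹ • ∑ x ∈ S, EuclideanSpace.single x (1:ℂ))) : ℂ)
    = ((c:ℂ))⁻¹ * ((c:ℂ))⁻¹ * ∑ x ∈ S, ∑ y ∈ S, M x y := by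
  have hT : ∀ (v : EuclideanSpace ℂ (Fin n → Fin 2)) (p),
      ((Matrix.toEuclideanCLM (𝕜 := ℂ) M) v) p = ∑ q, M p q * v q := by
    intro v p
    have h2 : ((Matrix.toEuclideanCLM (𝕜 := ℂ) M) v) p
        = (WithLp.ofLp ((Matrix.toEuclideanCLM (𝕜 := ℂ) M) v)) p := rfl
    rw [h2, Matrix.ofLp_toEuclideanCLM]
    simp [Matrix.toLin'_apply, Matrix.mulVec, dotProduct]
  rw [inner_smul_left, _root_.map_smul, inner_smul_right, sum_inner, ← mul_assoc]
  congr 1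
  · rw [map_inv₀, Complex.conj_ofReal]
  refine Finset.sum_congr rfl fun x _ => ?_
  rw [EuclideanSpace.inner_single_left, _root_.map_one, one_mul, hT]
  rw [Finset.sum_congr rfl (fun q _ => by rw [WithLp.ofLp_sum, Finset.sum_apply])]
  simp [EuclideanSpace.single_apply, mul_ite, Finset.sum_ite_eq, Finset.mul_sum]

def e2 : Fin 2 → ℕ := fun a => if a = 1 then 1 else 0

lemma wt_decomp {n : ℕ} (i j : Fin n) (hij : i ≠ j) (x : Fin n → Fin 2) :
    (Finset.univ.filter fun k => x k = 1).card
      = e2 (x i) + e2 (x j) + ∑ k ∈ (Finset.univ.erase i).erase j, e2 (x k) := by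
  rw [Finset.card_filter]
  have hi : i ∈ (Finset.univ : Finset (Fin n)) := Finset.mem_univ i
  have hj : j ∈ (Finset.univ.erase i) := Finset.mem_erase.mpr ⟨hij.symm, Finset.mem_univ j⟩
  rw [← Finset.add_sum_erase _ _ hi, ← Finset.add_sum_erase _ _ hj, ← add_assoc]
  rfl

lemma flip2_i {n : ℕ} (i j : Fin n) (hij : i ≠ j) (x : Fin n → Fin 2) :
    flip2 i j x i = sw (x i) := by
  rw [flip2, Function.update_of_ne hij, Function.update_self]

lemma flip2_j {n : ℕ} (i j : Fin n) (x : Fin n → Fin 2) :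
    flip2 i j x j = sw (x j) := Function.update_self _ _ _

lemma flip2_other {n : ℕ} (i j k : Fin n) (hki : k ≠ i) (hkj : k ≠ j) (x : Fin n → Fin 2) :
    flip2 i j x k = x k := by
  rw [flip2, Function.update_of_ne hkj, Function.update_of_ne hki]

lemma choose_nat_id (p : ℕ) :
    (p + 1) * (p + 1) * Nat.choose (2 * p + 2) (p + 1)
      = 2 * (p + 1) * (2 * p + 1) * Nat.choose (2 * p) p := by
  have h1 := Nat.add_one_mul_choose_eq (2 * p + 1) p
  have h2 := Nat.add_one_mul_choose_eq (2 * p) p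
  have h3 : (2 * p + 1).choose p = (2 * p + 1).choose (p + 1) := by
    have := Nat.choose_symm (show p + 1 ≤ 2 * p + 1 by omega)
    rw [show 2 * p + 1 - (p + 1) = p by omega] at this
    exact this
  calc (p + 1) * (p + 1) * Nat.choose (2 * p + 2) (p + 1)
      = (p + 1) * (Nat.choose (2 * p + 1 + 1) (p + 1) * (p + 1)) := by ring_nf
    _ = (p + 1) * ((2 * p + 1 + 1) * Nat.choose (2 * p + 1) p) := by rw [← h1]
    _ = (2 * p + 2) * (Nat.choose (2 * p + 1) (p + 1) * (p + 1)) := by rw [← h3]; ring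
    _ = (2 * p + 2) * ((2 * p + 1) * Nat.choose (2 * p) p) := by rw [← h2]
    _ = 2 * (p + 1) * (2 * p + 1) * Nat.choose (2 * p) p := by ring

lemma final_arith (p : ℕ) :
    ((Nat.choose (2 * p + 2) (p + 1) : ℂ))⁻¹ * (2 * (Nat.choose (2 * p) p : ℂ))
      = (((2 * p + 2 : ℕ) : ℂ)) / (2 * (((2 * p + 2 : ℕ) : ℂ) - 1)) := by
  have hC : ((Nat.choose (2 * p + 2) (p + 1) : ℂ)) ≠ 0 :=
    Nat.cast_ne_zero.mpr (Nat.choose_pos (by omega)).ne'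
  have hp : ((p : ℂ) + 1) ≠ 0 := by
    intro h
    have := congrArg Complex.re h
    simp [Complex.add_re] at this
    nlinarith [Nat.cast_nonneg (α := ℝ) p, this]
  have hden : 2 * (((2 * p + 2 : ℕ) : ℂ) - 1) ≠ 0 := by
    intro h
    have h2 : (((2 * p + 2 : ℕ) : ℂ) - 1) = ((2 * p + 1 : ℕ) : ℂ) := by push_cast; ring
    rw [h2] at h
    simp at h
    exact (Nat.cast_ne_zero (R := ℂ).mpr (show 2*p+1 ≠ 0 by omega)) (by exact_mod_cast h)
  have hid : (((p + 1) * (p + 1) * Nat.choose (2 * p + 2) (p + 1) : ℕ) : ℂ)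
      = ((2 * (p + 1) * (2 * p + 1) * Nat.choose (2 * p) p : ℕ) : ℂ) :=
    congrArg _ (choose_nat_id p)
  push_cast at hid
  rw [eq_div_iff hden, inv_mul_eq_div, div_mul_eq_mul_div, div_eq_iff hC]
  push_cast
  refine mul_left_cancel₀ hp ?_
  linear_combination (-2:ℂ) * hid
lemma count_lemma {n : ℕ} (hn2 : 2 ≤ n) (hm : 1 ≤ n / 2) (i j : Fin n) (hij : i ≠ j) :
    ((Finset.univ.filter
        (fun x : Fin n → Fin 2 => (Finset.univ.filter fun k => x k = 1).card = n / 2)).filter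
      (fun x => flip2 i j x ∈ Finset.univ.filter
        (fun x : Fin n → Fin 2 => (Finset.univ.filter fun k => x k = 1).card = n / 2))).card
    = 2 * Nat.choose (n - 2) (n / 2 - 1) := by
  set m := n / 2 with hmdef
  set s : Finset (Fin n) := (Finset.univ.erase i).erase j with hs
  have hscard : s.card = n - 2 := by
    rw [hs, Finset.card_erase_of_mem (Finset.mem_erase.mpr ⟨hij.symm, Finset.mem_univ j⟩),
      Finset.card_erase_of_mem (Finset.mem_univ i)]
    simp [Fintype.card_fin]
    omega
  -- rewrite the filter condition
  have hcond : ∀ x : Fin n → Fin 2,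
      ((Finset.univ.filter fun k => x k = 1).card = m ∧
        (Finset.univ.filter fun k => flip2 i j x k = 1).card = m)
      ↔ ((Finset.univ.filter fun k => x k = 1).card = m ∧ x i ≠ x j) := by
    intro x
    have h1 := wt_decomp i j hij x
    have h2 := wt_decomp i j hij (flip2 i j x)
    rw [flip2_i i j hij, flip2_j] at h2
    have h3 : ∑ k ∈ (Finset.univ.erase i).erase j, e2 (flip2 i j x k)
        = ∑ k ∈ (Finset.univ.erase i).erase j, e2 (x k) := by
      refine Finset.sum_congr rfl fun k hk => ?_
      rw [Finset.mem_erase, Finset.mem_erase] at hk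
      rw [flip2_other i j k hk.2.1 hk.1]
    rw [h3] at h2
    have key : ∀ a b : Fin 2, (e2 (sw a) + e2 (sw b) = e2 a + e2 b) ↔ a ≠ b := by decide
    constructor
    · rintro ⟨hw, hwf⟩
      refine ⟨hw, (key _ _).mp ?_⟩
      omega
    · rintro ⟨hw, hne⟩
      refine ⟨hw, ?_⟩
      have := (key _ _).mpr hne
      omega
  have hfilter : ((Finset.univ.filter
        (fun x : Fin n → Fin 2 => (Finset.univ.filter fun k => x k = 1).card = m)).filter
      (fun x => flip2 i j x ∈ Finset.univ.filter
        (fun x : Fin n → Fin 2 => (Finset.univ.filter fun k => x k = 1).card = m)))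
      = Finset.univ.filter (fun x : Fin n → Fin 2 =>
          (Finset.univ.filter fun k => x k = 1).card = m ∧ x i ≠ x j) := by
    ext x
    simp only [Finset.mem_filter, Finset.mem_univ, true_and]
    have := hcond x
    tauto
  rw [hfilter]
  have key1 : ∀ a b : Fin 2, a ≠ b → e2 a + e2 b = 1 := by decide
  have key2 : ∀ a : Fin 2, e2 a + e2 (sw a) = 1 := by decide
  have key3 : ∀ a : Fin 2, sw a ≠ a := by decide
  have key4 : ∀ a b : Fin 2, a ≠ b → sw a = b := by decide
  have key5 : ∀ a : Fin 2, (if a = 1 then (1 : Fin 2) else 0) = a := by decide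
  have hcard2 : ((Finset.univ : Finset (Fin 2)) ×ˢ Finset.powersetCard (m - 1) s).card
      = 2 * Nat.choose (n - 2) (m - 1) := by
    rw [Finset.card_product, Finset.card_powersetCard, hscard]
    simp
  rw [← hcard2]
  refine Finset.card_nbij' (fun x => (x i, s.filter (fun k => x k = 1)))
    (fun p => fun k => if k = i then p.1 else if k = j then sw p.1 else if k ∈ p.2 then 1 else 0)
    ?_ ?_ ?_ ?_
  · intro x hx
    rw [Finset.mem_coe, Finset.mem_filter] at hx
    obtain ⟨-, hw, hne⟩ := hx
    rw [Finset.mem_coe, Finset.mem_product, Finset.mem_powersetCard]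
    refine ⟨Finset.mem_univ _, Finset.filter_subset _ _, ?_⟩
    have hd := wt_decomp i j hij x
    have hc : (s.filter (fun k => x k = 1)).card = ∑ k ∈ s, e2 (x k) :=
      Finset.card_filter _ _
    have h1 := key1 _ _ hne
    rw [hw, ← hs] at hd
    clear_value m s
    show (s.filter (fun k => x k = 1)).card = m - 1
    omega
  · intro p hp
    rw [Finset.mem_coe, Finset.mem_product, Finset.mem_powersetCard] at hp
    obtain ⟨-, hBs, hBc⟩ := hp
    set g : Fin n → Fin 2 :=
      fun k => if k = i then p.1 else if k = j then sw p.1 else if k ∈ p.2 then 1 else 0 with hg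
    have hgi : g i = p.1 := by simp [hg]
    have hgj : g j = sw p.1 := by simp [hg, hij.symm]
    have hgo : ∀ k, k ≠ i → k ≠ j → g k = if k ∈ p.2 then 1 else 0 := by
      intro k h1 h2; simp [hg, h1, h2]
    rw [Finset.mem_coe, Finset.mem_filter]
    refine ⟨Finset.mem_univ _, ?_, ?_⟩
    · show (Finset.univ.filter fun k => g k = 1).card = m
      rw [wt_decomp i j hij g, hgi, hgj]
      have hsum : ∑ k ∈ (Finset.univ.erase i).erase j, e2 (g k) = p.2.card := by
        have step1 : ∑ k ∈ (Finset.univ.erase i).erase j, e2 (g k)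
            = ∑ k ∈ (Finset.univ.erase i).erase j, (if k ∈ p.2 then 1 else 0) := by
          refine Finset.sum_congr rfl fun k hk => ?_
          rw [Finset.mem_erase, Finset.mem_erase] at hk
          rw [hgo k hk.2.1 hk.1]
          by_cases hkB : k ∈ p.2 <;> simp [hkB, e2]
        rw [step1, Finset.sum_ite_mem, Finset.inter_eq_right.mpr hBs]
        simp
      rw [hsum, hBc]
      have := key2 p.1
      omega
    · show g i ≠ g j
      rw [hgi, hgj]
      exact fun h => key3 p.1 h.symm
  · intro x hx
    rw [Finset.mem_coe, Finset.mem_filter] at hx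
    obtain ⟨-, -, hne⟩ := hx
    funext k
    by_cases hki : k = i
    · subst hki; simp
    by_cases hkj : k = j
    · subst hkj
      simp only [if_neg hki, if_pos rfl]
      exact key4 _ _ hne
    · simp only [if_neg hki, if_neg hkj, Finset.mem_filter]
      have hks : k ∈ s := by
        rw [Finset.mem_erase, Finset.mem_erase]
        exact ⟨hkj, hki, Finset.mem_univ k⟩
      simp only [Finset.mem_filter, hks, true_and]
      exact key5 (x k)
  · intro p hp
    rw [Finset.mem_coe, Finset.mem_product, Finset.mem_powersetCard] at hp
    obtain ⟨-, hBs, -⟩ := hp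
    have h1 : (if i = i then p.1 else if i = j then sw p.1 else if i ∈ p.2 then 1 else 0) = p.1 := by
      simp
    refine Prod.ext h1 ?_
    ext k
    simp only [Finset.mem_filter]
    constructor
    · rintro ⟨hks, hval⟩
      rw [Finset.mem_erase, Finset.mem_erase] at hks
      rw [if_neg hks.2.1, if_neg hks.1] at hval
      by_cases hkB : k ∈ p.2
      · exact hkB
      · rw [if_neg hkB] at hval; exact absurd hval (by decide)
    · intro hkB
      have hks := hBs hkB
      have hks' := hks
      rw [Finset.mem_erase, Finset.mem_erase] at hks'
      refine ⟨hks, ?_⟩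
      rw [if_neg hks'.2.1, if_neg hks'.1, if_pos hkB]

/-- Dicke-state correlation: `⟨g_B| σ_x⁽ⁱ⁾ σ_x⁽ʲ⁾ |g_B⟩ = n/(2(n−1))`, which is at least `1/2`. -/
theorem dicke_xx_correlation (n : ℕ) (hn : Even n) (hn2 : 2 ≤ n)
    (i j : Fin n) (hij : i ≠ j) :
    (inner ℂ (dickeState n)
        ((Matrix.toEuclideanCLM (𝕜 := ℂ) (liftOp n i pauliX * liftOp n j pauliX))
          (dickeState n)) : ℂ)
      = ((n : ℂ) / (2 * ((n : ℂ) - 1))) ∧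
    (1 / 2 : ℝ) ≤ (n : ℝ) / (2 * ((n : ℝ) - 1)) := by
  constructor
  · obtain ⟨q, hq⟩ := hn
    have hq1 : 1 ≤ q := by omega
    have hnp : n = 2 * (q - 1) + 2 := by omega
    set p := q - 1 with hpdef
    set S := Finset.univ.filter
        (fun x : Fin n → Fin 2 => (Finset.univ.filter fun i => x i = 1).card = n / 2) with hS
    rw [dickeState, inner_eval]
    have hsum : ∑ x ∈ S, ∑ y ∈ S, (liftOp n i pauliX * liftOp n j pauliX) x y
        = ((S.filter (fun x => flip2 i j x ∈ S)).card : ℂ) := by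
      rw [← Finset.sum_boole]
      refine Finset.sum_congr rfl fun x _ => ?_
      rw [Finset.sum_congr rfl fun y _ => mulXX_apply i j hij x y]
      exact Finset.sum_ite_eq' S (flip2 i j x) (fun _ => 1)
    rw [hsum, hS, count_lemma hn2 (by omega) i j hij]
    have hc : ((Real.sqrt (Nat.choose n (n / 2)) : ℝ) : ℂ)⁻¹
        * ((Real.sqrt (Nat.choose n (n / 2)) : ℝ) : ℂ)⁻¹
        = ((Nat.choose n (n / 2) : ℂ))⁻¹ := by
      rw [← mul_inv, ← Complex.ofReal_mul, Real.mul_self_sqrt (by positivity)]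
      norm_num
    rw [hc]
    have e1 : n / 2 = p + 1 := by omega
    have e2 : n - 2 = 2 * p := by omega
    have e3 : n / 2 - 1 = p := by omega
    have e4 : (n : ℂ) = ((2 * p + 2 : ℕ) : ℂ) := by rw [← hnp]
    rw [e3, e2, e1, e4, hnp]
    push_cast
    have := final_arith p
    push_cast at this
    rw [← this]
  · have h2 : (2 : ℝ) ≤ (n : ℝ) := by exact_mod_cast hn2
    rw [div_le_div_iff₀ (by norm_num) (by linarith)]
    linarith
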